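/- For portfolio weights x ≥ 0 with ∑ᵢ xᵢ = 1 and risk measure ρ positive, convex, positively homogeneous with ρᵢ = ρ(eᵢ), the map x ↦ y = x / (∑ᵢ xᵢ ρᵢ) is a bijection between {x ∈ Δ : ∑ᵢ μᵢ xᵢ ≥ η} and {y ≥ 0 : ∑ᵢ ρᵢ yᵢ = 1, ∑ᵢ μᵢ yᵢ ≥ η ∑ᵢ yᵢ}, with inverse y ↦ y / ∑ᵢ yᵢ, and it transforms 1/DR(x) = ρ(x)/(∑ᵢ xᵢ ρᵢ) into ρ(y). -/

import Mathlib

/-- The map `x ↦ y = x/(∑ᵢ xᵢρᵢ)` is a bijection between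
`{x ∈ Δ : ∑ μᵢxᵢ ≥ η}` and `{y ≥ 0 : ∑ ρᵢyᵢ = 1, ∑ μᵢyᵢ ≥ η ∑ yᵢ}` with inverse
`y ↦ y/∑ yᵢ`, and it transforms `1/DR(x) = ρ(x)/(∑ xᵢρᵢ)` into `ρ(y)`. -/
theorem stmt9 (n : ℕ) (ρ : (Fin n → ℝ) → ℝ) (μ : Fin n → ℝ) (η : ℝ)
    (hpos : ∀ x : Fin n → ℝ, (∀ i, 0 ≤ x i) → x ≠ 0 → 0 < ρ x)
    (hconv : ∀ x y : Fin n → ℝ, (∀ i, 0 ≤ x i) → (∀ i, 0 ≤ y i) →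
      ∀ t : ℝ, 0 ≤ t → t ≤ 1 → ρ (t • x + (1 - t) • y) ≤ t * ρ x + (1 - t) * ρ y)
    (hhom : ∀ x : Fin n → ℝ, (∀ i, 0 ≤ x i) → ∀ t : ℝ, 0 ≤ t → ρ (t • x) = t * ρ x)
    (A B : Set (Fin n → ℝ))
    (hA : A = {x : Fin n → ℝ | (∀ i, 0 ≤ x i) ∧ (∑ i, x i) = 1 ∧ (∑ i, μ i * x i) ≥ η})
    (hB : B = {y : Fin n → ℝ | (∀ i, 0 ≤ y i) ∧ (∑ i, ρ (Pi.single i 1) * y i) = 1 ∧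
      (∑ i, μ i * y i) ≥ η * ∑ i, y i})
    (f g : (Fin n → ℝ) → (Fin n → ℝ))
    (hf : ∀ x, f x = (∑ i, x i * ρ (Pi.single i 1))⁻¹ • x)
    (hg : ∀ y, g y = (∑ i, y i)⁻¹ • y) :
    (∀ x ∈ A, f x ∈ B) ∧ (∀ y ∈ B, g y ∈ A) ∧
    (∀ x ∈ A, g (f x) = x) ∧ (∀ y ∈ B, f (g y) = y) ∧
    (∀ x ∈ A, ρ (f x) = ρ x / (∑ i, x i * ρ (Pi.single i 1))) := by
  subst hA hB
  -- ρ of each basis vector is positive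
  have hρi : ∀ i : Fin n, 0 < ρ (Pi.single i 1) := by
    intro i
    apply hpos
    · intro j
      rcases eq_or_ne j i with h | h <;> simp [Pi.single_apply, h]
    · intro h
      have : (Pi.single i 1 : Fin n → ℝ) i = 0 := by rw [h]; rfl
      simp at this
  -- For x ∈ A, the denominator S is positive
  have hS : ∀ x : Fin n → ℝ, (∀ i, 0 ≤ x i) → (∑ i, x i) = 1 →
      0 < ∑ i, x i * ρ (Pi.single i 1) := by
    intro x hx hsum
    obtain ⟨i, -, hi⟩ : ∃ i ∈ Finset.univ, 0 < x i := by
      by_contra h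
      push_neg at h
      have : (∑ i, x i) ≤ 0 := Finset.sum_nonpos fun i hi => h i hi
      linarith
    refine Finset.sum_pos' (fun j _ => mul_nonneg (hx j) (hρi j).le) ⟨i, Finset.mem_univ i, ?_⟩
    exact mul_pos hi (hρi i)
  -- For y ∈ B, the sum T is positive
  have hT : ∀ y : Fin n → ℝ, (∀ i, 0 ≤ y i) → (∑ i, ρ (Pi.single i 1) * y i) = 1 →
      0 < ∑ i, y i := by
    intro y hy hsum
    obtain ⟨i, -, hi⟩ : ∃ i ∈ Finset.univ, 0 < ρ (Pi.single i 1) * y i := by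
      by_contra h
      push_neg at h
      have : (∑ i, ρ (Pi.single i 1) * y i) ≤ 0 := Finset.sum_nonpos fun i hi => h i hi
      linarith
    have hyi : 0 < y i := by
      by_contra h
      push_neg at h
      nlinarith [hρi i, hy i]
    exact Finset.sum_pos' (fun j _ => hy j) ⟨i, Finset.mem_univ i, hyi⟩
  have hfB : ∀ x, (∀ i, 0 ≤ x i) → (∑ i, x i) = 1 → (∑ i, μ i * x i) ≥ η →
      (∀ i, 0 ≤ f x i) ∧ (∑ i, ρ (Pi.single i 1) * f x i) = 1 ∧
        (∑ i, μ i * f x i) ≥ η * ∑ i, f x i := by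
    intro x hx hsum hμ
    set S := ∑ i, x i * ρ (Pi.single i 1) with hSdef
    have hS0 := hS x hx hsum
    have hfx : ∀ i, f x i = S⁻¹ * x i := by intro i; rw [hf]; rfl
    have hsum1 : (∑ i, ρ (Pi.single i 1) * f x i) = 1 := by
      simp only [hfx]
      rw [show (∑ i, ρ (Pi.single i 1) * (S⁻¹ * x i)) = S⁻¹ * ∑ i, x i * ρ (Pi.single i 1) by
        rw [Finset.mul_sum]; apply Finset.sum_congr rfl; intro i _; ring]
      field_simp
      exact div_self (ne_of_gt hS0)
    refine ⟨fun i => by rw [hfx]; exact mul_nonneg (inv_pos.mpr hS0).le (hx i), hsum1, ?_⟩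
    have h1 : (∑ i, μ i * f x i) = S⁻¹ * ∑ i, μ i * x i := by
      simp only [hfx]; rw [Finset.mul_sum]; apply Finset.sum_congr rfl; intro i _; ring
    have h2 : (∑ i, f x i) = S⁻¹ := by
      simp only [hfx]; rw [← Finset.mul_sum, hsum, mul_one]
    rw [h1, h2]
    have := mul_le_mul_of_nonneg_left hμ (le_of_lt (inv_pos.mpr hS0))
    linarith
  have hgA : ∀ y, (∀ i, 0 ≤ y i) → (∑ i, ρ (Pi.single i 1) * y i) = 1 →
      (∑ i, μ i * y i) ≥ η * ∑ i, y i →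
      (∀ i, 0 ≤ g y i) ∧ (∑ i, g y i) = 1 ∧ (∑ i, μ i * g y i) ≥ η := by
    intro y hy hsum hμ
    have hT0 := hT y hy hsum
    have hgy : ∀ i, g y i = (∑ i, y i)⁻¹ * y i := by intro i; rw [hg]; rfl
    refine ⟨fun i => by rw [hgy]; exact mul_nonneg (inv_pos.mpr hT0).le (hy i), ?_, ?_⟩
    · simp only [hgy]; rw [← Finset.mul_sum]; field_simp
    · have h1 : (∑ i, μ i * g y i) = (∑ i, y i)⁻¹ * ∑ i, μ i * y i := by
        simp only [hgy]; rw [Finset.mul_sum]; apply Finset.sum_congr rfl; intro i _; ring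
      rw [ge_iff_le, h1, inv_mul_eq_div, le_div_iff₀ hT0]
      linarith [hμ]
  refine ⟨?_, ?_, ?_, ?_, ?_⟩
  · rintro x ⟨hx, hsum, hμ⟩
    exact hfB x hx hsum hμ
  · rintro y ⟨hy, hsum, hμ⟩
    exact hgA y hy hsum hμ
  · rintro x ⟨hx, hsum, hμ⟩
    set S := ∑ i, x i * ρ (Pi.single i 1) with hSdef
    have hS0 := hS x hx hsum
    have hsumf : (∑ i, f x i) = S⁻¹ := by
      rw [hf]
      simp only [Pi.smul_apply, smul_eq_mul]
      rw [← Finset.mul_sum, hsum, mul_one]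
    rw [hg, hsumf, hf, smul_smul, inv_inv]
    rw [mul_inv_cancel₀ (ne_of_gt hS0), one_smul]
  · rintro y ⟨hy, hsum, hμ⟩
    have hT0 := hT y hy hsum
    have hsumg : (∑ i, g y i * ρ (Pi.single i 1)) = (∑ i, y i)⁻¹ := by
      rw [hg]
      simp only [Pi.smul_apply, smul_eq_mul]
      rw [show (∑ i, (∑ j, y j)⁻¹ * y i * ρ (Pi.single i 1))
          = (∑ i, y i)⁻¹ * ∑ i, ρ (Pi.single i 1) * y i by
        rw [Finset.mul_sum]; apply Finset.sum_congr rfl; intro i _; ring]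
      rw [hsum, mul_one]
    rw [hf, hsumg, hg, smul_smul, inv_inv]
    rw [mul_inv_cancel₀ (ne_of_gt hT0), one_smul]
  · rintro x ⟨hx, hsum, hμ⟩
    have hS0 := hS x hx hsum
    rw [hf, hhom x hx _ (le_of_lt (inv_pos.mpr hS0))]
    rw [inv_mul_eq_div]
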